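/- Let φ : 𝔹ℂ^{n×n} → 𝔹ℂ^{m×m} be a 𝔹ℂ-linear completely hyperbolic positive map. Then there exist r ∈ ℕ and bicomplex matrices V₁, …, V_r ∈ 𝔹ℂ^{m×n} such that φ(A) = Σ_{i=1}^{r} Vᵢ·A·(Vᵢ*)ᵗ for all A ∈ 𝔹ℂ^{n×n} (a bicomplex Kraus decomposition; i.e. φ is a finite bicomplex quantum channel). -/

import Mathlib

open Complex Matrix Kronecker BigOperators

open scoped ComplexOrder

/-- Bicomplex numbers, modeled as pairs `(z₁, z₂) ∈ ℂ × ℂ` representing `z₁ + j z₂`.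
Addition is the componentwise (Prod) addition. -/
abbrev BC : Type := ℂ × ℂ

noncomputable section

/-- Bicomplex multiplication: `(z₁,z₂)·(w₁,w₂) = (z₁w₁ − z₂w₂, z₁w₂ + z₂w₁)`. -/
def bcMul (z w : BC) : BC := (z.1 * w.1 - z.2 * w.2, z.1 * w.2 + z.2 * w.1)

/-- The `*`-conjugate `Z* = conj z₁ − j conj z₂`. -/
def bcStar (z : BC) : BC := ((starRingEnd ℂ) z.1, -((starRingEnd ℂ) z.2))

/-- First idempotent component `λ₁ = z₁ − i z₂`. -/
def idem1 (z : BC) : ℂ := z.1 - Complex.I * z.2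

/-- Second idempotent component `λ₂ = z₁ + i z₂`. -/
def idem2 (z : BC) : ℂ := z.1 + Complex.I * z.2

/-- Membership in `𝔻⁺`: both idempotent components are nonnegative real numbers. -/
def inDplus (z : BC) : Prop :=
  (idem1 z).im = 0 ∧ 0 ≤ (idem1 z).re ∧ (idem2 z).im = 0 ∧ 0 ≤ (idem2 z).re

/-- A bicomplex matrix `A = A₁ + j A₂` is a pair of complex matrices. -/
abbrev BCMat (I J : Type) : Type := Matrix I J ℂ × Matrix I J ℂ

/-- Bicomplex matrix multiplication, induced by bicomplex multiplication. -/
def bmul {I J K : Type} [Fintype J] (A : BCMat I J) (B : BCMat J K) : BCMat I K :=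
  (A.1 * B.1 - A.2 * B.2, A.1 * B.2 + A.2 * B.1)

/-- `(A*)ᵗ`: the entrywise `*`-conjugate followed by transpose. -/
def bcStarT {I J : Type} (A : BCMat I J) : BCMat J I := (A.1ᴴ, -(A.2ᴴ))

/-- The `(j,k)` entry of a bicomplex matrix, as a bicomplex number. -/
def bcEntry {I J : Type} (A : BCMat I J) (j : I) (k : J) : BC := (A.1 j k, A.2 j k)

/-- First idempotent component `𝒜₁ = A₁ − i A₂` of a bicomplex matrix. -/
def midem1 {I J : Type} (A : BCMat I J) : Matrix I J ℂ := A.1 - Complex.I • A.2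

/-- Second idempotent component `𝒜₂ = A₁ + i A₂` of a bicomplex matrix. -/
def midem2 {I J : Type} (A : BCMat I J) : Matrix I J ℂ := A.1 + Complex.I • A.2

/-- The bicomplex number `(c*)ᵗ · A · c`. -/
def quadForm {I : Type} [Fintype I] (A : BCMat I I) (c : I → BC) : BC :=
  ∑ j, ∑ k, bcMul (bcStar (c j)) (bcMul (bcEntry A j k) (c k))

/-- `A` is hyperbolic positive if `(c*)ᵗ · A · c ∈ 𝔻⁺` for every bicomplex vector `c`. -/
def HypPos {I : Type} [Fintype I] (A : BCMat I I) : Prop :=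
  ∀ c : I → BC, inDplus (quadForm A c)

/-- Bicomplex trace `Tr(A) = Tr(A₁) + j Tr(A₂)`. -/
def bcTrace {I : Type} [Fintype I] (A : BCMat I I) : BC := (A.1.trace, A.2.trace)

/-- The bicomplex tensor product
`A ⊗ⱼ B = (A₁⊗B₁ − A₂⊗B₂) + j (A₁⊗B₂ + A₂⊗B₁)`. -/
def bkron {I J K L : Type} (A : BCMat I J) (B : BCMat K L) : BCMat (I × K) (J × L) :=
  (A.1 ⊗ₖ B.1 - A.2 ⊗ₖ B.2, A.1 ⊗ₖ B.2 + A.2 ⊗ₖ B.1)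

end

noncomputable section

/-- Bicomplex scalar multiplication of a bicomplex matrix by a bicomplex number. -/
def bcSmulMat {I J : Type} (z : BC) (A : BCMat I J) : BCMat I J :=
  (z.1 • A.1 - z.2 • A.2, z.1 • A.2 + z.2 • A.1)

/-- `𝔹ℂ`-linearity of a map between bicomplex matrix spaces. -/
def BCLinear {n m : ℕ} (φ : BCMat (Fin n) (Fin n) → BCMat (Fin m) (Fin m)) : Prop :=
  (∀ A B : BCMat (Fin n) (Fin n), φ (A + B) = φ A + φ B) ∧
  (∀ (z : BC) (A : BCMat (Fin n) (Fin n)), φ (bcSmulMat z A) = bcSmulMat z (φ A))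

/-- The block extension `φ_N` of `φ`, applying `φ` to each `n×n` block of an
`N×N` block matrix. -/
def blockExt {n m : ℕ} (φ : BCMat (Fin n) (Fin n) → BCMat (Fin m) (Fin m)) (N : ℕ)
    (A : BCMat (Fin N × Fin n) (Fin N × Fin n)) : BCMat (Fin N × Fin m) (Fin N × Fin m) :=
  (Matrix.of fun p q =>
      (φ (Matrix.of fun a b => A.1 (p.1, a) (q.1, b),
          Matrix.of fun a b => A.2 (p.1, a) (q.1, b))).1 p.2 q.2,
   Matrix.of fun p q =>
      (φ (Matrix.of fun a b => A.1 (p.1, a) (q.1, b),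
          Matrix.of fun a b => A.2 (p.1, a) (q.1, b))).2 p.2 q.2)

/-- `φ` is completely hyperbolic positive if every block extension `φ_N` sends
hyperbolic positive matrices to hyperbolic positive matrices. -/
def CompletelyHypPos {n m : ℕ}
    (φ : BCMat (Fin n) (Fin n) → BCMat (Fin m) (Fin m)) : Prop :=
  ∀ (N : ℕ) (A : BCMat (Fin N × Fin n) (Fin N × Fin n)),
    HypPos A → HypPos (blockExt φ N A)
-- scalar idempotent lemmas
lemma idem1_bcMul (z w : BC) : idem1 (bcMul z w) = idem1 z * idem1 w := by
  simp only [idem1, bcMul]; linear_combination (-(z.2*w.2)) * Complex.I_sq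

lemma idem2_bcMul (z w : BC) : idem2 (bcMul z w) = idem2 z * idem2 w := by
  simp only [idem2, bcMul]; linear_combination (-(z.2*w.2)) * Complex.I_sq

lemma idem1_bcStar (z : BC) : idem1 (bcStar z) = (starRingEnd ℂ) (idem1 z) := by
  simp only [idem1, bcStar, map_sub, RingHom.map_mul, Complex.conj_I]; ring

lemma idem2_bcStar (z : BC) : idem2 (bcStar z) = (starRingEnd ℂ) (idem2 z) := by
  simp only [idem2, bcStar, map_add, RingHom.map_mul, Complex.conj_I]; ring

lemma idem1_add (z w : BC) : idem1 (z + w) = idem1 z + idem1 w := by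
  simp only [idem1, Prod.fst_add, Prod.snd_add]; ring

lemma idem2_add (z w : BC) : idem2 (z + w) = idem2 z + idem2 w := by
  simp only [idem2, Prod.fst_add, Prod.snd_add]; ring

lemma idem1_sum {α : Type} (s : Finset α) (f : α → BC) :
    idem1 (∑ a ∈ s, f a) = ∑ a ∈ s, idem1 (f a) := by
  classical
  induction s using Finset.induction with
  | empty => simp [idem1]
  | insert _ _ h ih => simp [Finset.sum_insert h, idem1_add, ih]

lemma idem2_sum {α : Type} (s : Finset α) (f : α → BC) :
    idem2 (∑ a ∈ s, f a) = ∑ a ∈ s, idem2 (f a) := by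
  classical
  induction s using Finset.induction with
  | empty => simp [idem2]
  | insert _ _ h ih => simp [Finset.sum_insert h, idem2_add, ih]
-- matrix idempotent lemmas
lemma midem1_bmul {I J K : Type} [Fintype J] (A : BCMat I J) (B : BCMat J K) :
    midem1 (bmul A B) = midem1 A * midem1 B := by
  simp only [midem1, bmul, Matrix.sub_mul, Matrix.mul_sub, Matrix.smul_mul, Matrix.mul_smul,
    smul_smul, Complex.I_mul_I, neg_one_smul, smul_add, smul_sub]
  abel

lemma midem2_bmul {I J K : Type} [Fintype J] (A : BCMat I J) (B : BCMat J K) :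
    midem2 (bmul A B) = midem2 A * midem2 B := by
  simp only [midem2, bmul, Matrix.add_mul, Matrix.mul_add, Matrix.smul_mul, Matrix.mul_smul,
    smul_smul, Complex.I_mul_I, neg_one_smul, smul_add, smul_sub]
  abel

lemma midem1_bcStarT {I J : Type} (A : BCMat I J) :
    midem1 (bcStarT A) = (midem1 A)ᴴ := by
  simp only [midem1, bcStarT]
  ext i j
  simp only [Matrix.sub_apply, Matrix.conjTranspose_apply, Matrix.smul_apply, smul_eq_mul,
    Matrix.neg_apply, map_sub, RingHom.map_mul, Complex.conj_I, star_sub, star_mul', Complex.star_def]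
  ring

lemma midem2_bcStarT {I J : Type} (A : BCMat I J) :
    midem2 (bcStarT A) = (midem2 A)ᴴ := by
  simp only [midem2, bcStarT]
  ext i j
  simp only [Matrix.add_apply, Matrix.conjTranspose_apply, Matrix.smul_apply, smul_eq_mul,
    Matrix.neg_apply, map_add, RingHom.map_mul, Complex.conj_I, star_add, star_mul', Complex.star_def]
  ring

lemma midem1_add {I J : Type} (A B : BCMat I J) : midem1 (A + B) = midem1 A + midem1 B := by
  simp only [midem1, Prod.fst_add, Prod.snd_add, smul_add]; abel

lemma midem2_add {I J : Type} (A B : BCMat I J) : midem2 (A + B) = midem2 A + midem2 B := by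
  simp only [midem2, Prod.fst_add, Prod.snd_add, smul_add]; abel

lemma midem1_sum {α I J : Type} (s : Finset α) (f : α → BCMat I J) :
    midem1 (∑ a ∈ s, f a) = ∑ a ∈ s, midem1 (f a) := by
  classical
  induction s using Finset.induction with
  | empty => simp [midem1]
  | insert _ _ h ih => simp [Finset.sum_insert h, midem1_add, ih]

lemma midem2_sum {α I J : Type} (s : Finset α) (f : α → BCMat I J) :
    midem2 (∑ a ∈ s, f a) = ∑ a ∈ s, midem2 (f a) := by
  classical
  induction s using Finset.induction with
  | empty => simp [midem2]
  | insert _ _ h ih => simp [Finset.sum_insert h, midem2_add, ih]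

lemma bcmat_ext {I J : Type} {A B : BCMat I J}
    (h1 : midem1 A = midem1 B) (h2 : midem2 A = midem2 B) : A = B := by
  simp only [midem1, midem2] at h1 h2
  have hA1 : A.1 = B.1 := by
    ext i j
    have e1 := congrFun (congrFun h1 i) j
    have e2 := congrFun (congrFun h2 i) j
    simp only [Matrix.sub_apply, Matrix.add_apply, Matrix.smul_apply, smul_eq_mul] at e1 e2
    linear_combination e1 / 2 + e2 / 2
  have hA2 : A.2 = B.2 := by
    ext i j
    have e1 := congrFun (congrFun h1 i) j
    have e2 := congrFun (congrFun h2 i) j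
    simp only [Matrix.sub_apply, Matrix.add_apply, Matrix.smul_apply, smul_eq_mul] at e1 e2
    linear_combination (-Complex.I/2) * e2 + (Complex.I/2) * e1 + (A.2 i j - B.2 i j) * Complex.I_sq
  exact Prod.ext hA1 hA2
lemma idem1_quadForm {I : Type} [Fintype I] (A : BCMat I I) (c : I → BC) :
    idem1 (quadForm A c) =
      star (fun j => idem1 (c j)) ⬝ᵥ (midem1 A *ᵥ fun j => idem1 (c j)) := by
  simp only [quadForm, idem1_sum, idem1_bcMul, idem1_bcStar, dotProduct, mulVec,
    Pi.star_apply, Finset.mul_sum]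
  refine Finset.sum_congr rfl fun j _ => Finset.sum_congr rfl fun k _ => ?_
  simp only [midem1, bcEntry, idem1, Matrix.sub_apply, Matrix.smul_apply, smul_eq_mul,
    Complex.star_def]
  try ring

lemma idem2_quadForm {I : Type} [Fintype I] (A : BCMat I I) (c : I → BC) :
    idem2 (quadForm A c) =
      star (fun j => idem2 (c j)) ⬝ᵥ (midem2 A *ᵥ fun j => idem2 (c j)) := by
  simp only [quadForm, idem2_sum, idem2_bcMul, idem2_bcStar, dotProduct, mulVec,
    Pi.star_apply, Finset.mul_sum]
  refine Finset.sum_congr rfl fun j _ => Finset.sum_congr rfl fun k _ => ?_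
  simp only [midem2, bcEntry, idem2, Matrix.add_apply, Matrix.smul_apply, smul_eq_mul,
    Complex.star_def]
  try ring

/-- Polarization: a complex matrix whose quadratic form is always real is Hermitian. -/
lemma isHermitian_of_quad_real {I : Type} [Fintype I] [DecidableEq I] (M : Matrix I I ℂ)
    (h : ∀ x : I → ℂ, (star x ⬝ᵥ (M *ᵥ x)).im = 0) : M.IsHermitian := by
  have key : ∀ x y : I → ℂ, star x ⬝ᵥ (M *ᵥ y) = (starRingEnd ℂ) (star y ⬝ᵥ (M *ᵥ x)) := by
    intro x y
    have h1 := h (x + y)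
    have h2 := h (x + Complex.I • y)
    have hx := h x
    have hy := h y
    simp only [star_add, star_smul, mulVec_add, mulVec_smul, add_dotProduct,
      smul_dotProduct, dotProduct_add, dotProduct_smul] at h1 h2
    simp only [Complex.add_im, Complex.add_re, Complex.star_def, smul_eq_mul, Complex.mul_im,
      Complex.mul_re, Complex.conj_re, Complex.conj_im, Complex.I_re, Complex.I_im] at h1 h2
    apply Complex.ext
    · simp only [Complex.conj_re]; nlinarith [h x, h y, h1, h2]
    · simp only [Complex.conj_im]; nlinarith [h x, h y, h1, h2]
  rw [Matrix.IsHermitian]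
  ext j k
  have := key (Pi.single j 1) (Pi.single k 1)
  rw [Matrix.conjTranspose_apply]
  have hjk : ∀ (a b : I), star (Pi.single a (1:ℂ)) ⬝ᵥ (M *ᵥ Pi.single b 1) = M a b := by
    intro a b
    simp [dotProduct, mulVec, Pi.single_apply, Finset.mul_sum, mul_ite, ite_mul,
      Finset.sum_ite_eq, Finset.sum_ite_eq']
  rw [hjk, hjk] at this
  rw [this]
  simp
/-- The bicomplex number with prescribed idempotent components. -/
def toBC (x y : ℂ) : BC := ((x + y) / 2, (x - y) * Complex.I / 2)

lemma idem1_toBC (x y : ℂ) : idem1 (toBC x y) = x := by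
  simp only [idem1, toBC]
  linear_combination (-(x - y)/2) * Complex.I_sq

lemma idem2_toBC (x y : ℂ) : idem2 (toBC x y) = y := by
  simp only [idem2, toBC]
  linear_combination ((x - y)/2) * Complex.I_sq

lemma hypPos_iff {I : Type} [Fintype I] [DecidableEq I] (A : BCMat I I) :
    HypPos A ↔ (midem1 A).PosSemidef ∧ (midem2 A).PosSemidef := by
  constructor
  · intro h
    have q1 : ∀ x : I → ℂ, star x ⬝ᵥ (midem1 A *ᵥ x) = idem1 (quadForm A (fun j => toBC (x j) 0)) := by
      intro x
      rw [idem1_quadForm]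
      congr 1 <;> [skip; congr 1] <;> funext j <;> simp [idem1_toBC]
    have q2 : ∀ x : I → ℂ, star x ⬝ᵥ (midem2 A *ᵥ x) = idem2 (quadForm A (fun j => toBC 0 (x j))) := by
      intro x
      rw [idem2_quadForm]
      congr 1 <;> [skip; congr 1] <;> funext j <;> simp [idem2_toBC]
    constructor
    · refine Matrix.PosSemidef.of_dotProduct_mulVec_nonneg (isHermitian_of_quad_real _ fun x => ?_) fun x => ?_
      · rw [q1]; exact (h _).1
      · rw [q1, Complex.nonneg_iff]
        exact ⟨(h _).2.1, ((h _).1).symm⟩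
    · refine Matrix.PosSemidef.of_dotProduct_mulVec_nonneg (isHermitian_of_quad_real _ fun x => ?_) fun x => ?_
      · rw [q2]; exact (h _).2.2.1
      · rw [q2, Complex.nonneg_iff]
        exact ⟨(h _).2.2.2, ((h _).2.2.1).symm⟩
  · rintro ⟨h1, h2⟩ c
    have e1 := h1.dotProduct_mulVec_nonneg (fun j => idem1 (c j))
    have e2 := h2.dotProduct_mulVec_nonneg (fun j => idem2 (c j))
    rw [Complex.nonneg_iff] at e1 e2
    rw [inDplus, idem1_quadForm, idem2_quadForm]
    exact ⟨e1.2.symm, e1.1, e2.2.symm, e2.1⟩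
lemma midem1_bcSmulMat {I J : Type} (z : BC) (A : BCMat I J) :
    midem1 (bcSmulMat z A) = idem1 z • midem1 A := by
  ext i j
  simp only [midem1, bcSmulMat, idem1, Matrix.sub_apply, Matrix.add_apply, Matrix.smul_apply,
    smul_eq_mul]
  linear_combination (-(z.2 * A.2 i j)) * Complex.I_sq

lemma midem2_bcSmulMat {I J : Type} (z : BC) (A : BCMat I J) :
    midem2 (bcSmulMat z A) = idem2 z • midem2 A := by
  ext i j
  simp only [midem2, bcSmulMat, idem2, Matrix.sub_apply, Matrix.add_apply, Matrix.smul_apply,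
    smul_eq_mul]
  linear_combination (-(z.2 * A.2 i j)) * Complex.I_sq

/-- Embedding of a complex matrix into the first idempotent slot. -/
def tb1 {I J : Type} (M : Matrix I J ℂ) : BCMat I J := ((2:ℂ)⁻¹ • M, (Complex.I / 2) • M)

/-- Embedding of a complex matrix into the second idempotent slot. -/
def tb2 {I J : Type} (M : Matrix I J ℂ) : BCMat I J := ((2:ℂ)⁻¹ • M, (-Complex.I / 2) • M)

lemma midem1_tb1 {I J : Type} (M : Matrix I J ℂ) : midem1 (tb1 M) = M := by
  ext i j
  simp only [midem1, tb1, Matrix.sub_apply, Matrix.smul_apply, smul_eq_mul]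
  linear_combination (-(M i j)/2) * Complex.I_sq

lemma midem2_tb1 {I J : Type} (M : Matrix I J ℂ) : midem2 (tb1 M) = 0 := by
  ext i j
  simp only [midem2, tb1, Matrix.add_apply, Matrix.smul_apply, smul_eq_mul, Matrix.zero_apply]
  linear_combination ((M i j)/2) * Complex.I_sq

lemma midem1_tb2 {I J : Type} (M : Matrix I J ℂ) : midem1 (tb2 M) = 0 := by
  ext i j
  simp only [midem1, tb2, Matrix.sub_apply, Matrix.smul_apply, smul_eq_mul, Matrix.zero_apply]
  linear_combination ((M i j)/2) * Complex.I_sq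

lemma midem2_tb2 {I J : Type} (M : Matrix I J ℂ) : midem2 (tb2 M) = M := by
  ext i j
  simp only [midem2, tb2, Matrix.add_apply, Matrix.smul_apply, smul_eq_mul]
  linear_combination (-(M i j)/2) * Complex.I_sq

/-- The idempotent `e₁` with `idem1 e₁ = 1`, `idem2 e₁ = 0`. -/
def ebc1 : BC := ((2:ℂ)⁻¹, Complex.I / 2)

/-- The idempotent `e₂` with `idem1 e₂ = 0`, `idem2 e₂ = 1`. -/
def ebc2 : BC := ((2:ℂ)⁻¹, -Complex.I / 2)

lemma idem1_ebc1 : idem1 ebc1 = 1 := by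
  simp only [idem1, ebc1]; linear_combination (-(1:ℂ)/2) * Complex.I_sq

lemma idem2_ebc2 : idem2 ebc2 = 1 := by
  simp only [idem2, ebc2]; linear_combination (-(1:ℂ)/2) * Complex.I_sq

lemma bcSmulMat_ebc1 {I J : Type} (A : BCMat I J) : bcSmulMat ebc1 A = tb1 (midem1 A) := by
  refine Prod.ext ?_ ?_ <;> ext i j <;>
    simp only [bcSmulMat, ebc1, tb1, midem1, Matrix.sub_apply, Matrix.add_apply,
      Matrix.smul_apply, smul_eq_mul]
  · ring
  · linear_combination ((A.2 i j)/2) * Complex.I_sq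

lemma bcSmulMat_ebc2 {I J : Type} (A : BCMat I J) : bcSmulMat ebc2 A = tb2 (midem2 A) := by
  refine Prod.ext ?_ ?_ <;> ext i j <;>
    simp only [bcSmulMat, ebc2, tb2, midem2, Matrix.sub_apply, Matrix.add_apply,
      Matrix.smul_apply, smul_eq_mul]
  · ring
  · linear_combination ((A.2 i j)/2) * Complex.I_sq

lemma tb1_smul {I J : Type} (c : ℂ) (M : Matrix I J ℂ) :
    tb1 (c • M) = bcSmulMat (c, 0) (tb1 M) := by
  refine Prod.ext ?_ ?_ <;> ext i j <;>
    simp only [tb1, bcSmulMat, Matrix.sub_apply, Matrix.add_apply, Matrix.smul_apply,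
      smul_eq_mul, Matrix.zero_apply] <;> ring

lemma tb2_smul {I J : Type} (c : ℂ) (M : Matrix I J ℂ) :
    tb2 (c • M) = bcSmulMat (c, 0) (tb2 M) := by
  refine Prod.ext ?_ ?_ <;> ext i j <;>
    simp only [tb2, bcSmulMat, Matrix.sub_apply, Matrix.add_apply, Matrix.smul_apply,
      smul_eq_mul, Matrix.zero_apply] <;> ring

lemma tb1_add {I J : Type} (M N : Matrix I J ℂ) : tb1 (M + N) = tb1 M + tb1 N := by
  refine Prod.ext ?_ ?_ <;> simp [tb1, smul_add, Prod.fst_add, Prod.snd_add]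

lemma tb2_add {I J : Type} (M N : Matrix I J ℂ) : tb2 (M + N) = tb2 M + tb2 N := by
  refine Prod.ext ?_ ?_ <;> simp [tb2, smul_add, Prod.fst_add, Prod.snd_add]
/-- Classical Choi–Kraus theorem over `ℂ`, from positive semidefiniteness of the Choi matrix. -/
lemma complex_choi {n m : ℕ} (ψ : Matrix (Fin n) (Fin n) ℂ → Matrix (Fin m) (Fin m) ℂ)
    (hadd : ∀ A B, ψ (A + B) = ψ A + ψ B)
    (hsmul : ∀ (c : ℂ) (A), ψ (c • A) = c • ψ A)
    (hpos : (Matrix.of fun (p q : Fin n × Fin m) =>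
        ψ (Matrix.single p.1 q.1 1) p.2 q.2).PosSemidef) :
    ∃ W : (Fin n × Fin m) → Matrix (Fin m) (Fin n) ℂ,
      ∀ A, ψ A = ∑ k, W k * A * (W k)ᴴ := by
  classical
  obtain ⟨B, hB⟩ : ∃ B : Matrix (Fin n × Fin m) (Fin n × Fin m) ℂ, (Matrix.of fun (p q : Fin n × Fin m) =>
      ψ (Matrix.single p.1 q.1 1) p.2 q.2) = Bᴴ * B := by
    open scoped MatrixOrder in exact CStarAlgebra.nonneg_iff_eq_star_mul_self.mp hpos.nonneg
  refine ⟨fun k => Matrix.of fun x a => (starRingEnd ℂ) (B k (a, x)), fun A => ?_⟩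
  have h0 : ψ 0 = 0 := by
    have := hsmul 0 0; simpa using this
  have hsum : ∀ {α : Type} (s : Finset α) (f : α → Matrix (Fin n) (Fin n) ℂ),
      ψ (∑ a ∈ s, f a) = ∑ a ∈ s, ψ (f a) := by
    intro α s f
    induction s using Finset.induction with
    | empty => simpa using h0
    | insert _ _ h ih => rw [Finset.sum_insert h, hadd, ih, Finset.sum_insert h]
  have hstd : ∀ (a b : Fin n), Matrix.single a b (A a b)
      = A a b • Matrix.single a b (1:ℂ) := by
    intro a b; rw [Matrix.smul_single, smul_eq_mul, mul_one]
  have hC : ∀ (a b : Fin n) (x y : Fin m), ψ (Matrix.single a b 1) x y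
      = ∑ k, (starRingEnd ℂ) (B k (a, x)) * B k (b, y) := by
    intro a b x y
    have : ψ (Matrix.single a b 1) x y = (Bᴴ * B) (a, x) (b, y) := by
      rw [← hB]; rfl
    rw [this, Matrix.mul_apply]
    apply Finset.sum_congr rfl
    intro k _
    rw [Matrix.conjTranspose_apply, Complex.star_def]
  ext x y
  have E1 : ψ A x y = ∑ a, ∑ b, ∑ k,
      A a b * ((starRingEnd ℂ) (B k (a, x)) * B k (b, y)) := by
    conv_lhs => rw [Matrix.matrix_eq_sum_single A]
    rw [hsum, Matrix.sum_apply]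
    apply Finset.sum_congr rfl; intro a _
    rw [hsum, Matrix.sum_apply]
    apply Finset.sum_congr rfl; intro b _
    rw [hstd a b, hsmul, Matrix.smul_apply, smul_eq_mul, hC a b x y, Finset.mul_sum]
  have E2 : (∑ k, (Matrix.of fun x a => (starRingEnd ℂ) (B k (a, x))) * A *
        (Matrix.of fun x a => (starRingEnd ℂ) (B k (a, x)))ᴴ) x y
      = ∑ k, ∑ b, ∑ a,
        A a b * ((starRingEnd ℂ) (B k (a, x)) * B k (b, y)) := by
    rw [Matrix.sum_apply]
    apply Finset.sum_congr rfl; intro k _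
    rw [Matrix.mul_apply]
    apply Finset.sum_congr rfl; intro b _
    rw [Matrix.mul_apply, Finset.sum_mul]
    apply Finset.sum_congr rfl; intro a _
    rw [Matrix.conjTranspose_apply, Matrix.of_apply, Matrix.of_apply]
    simp only [Complex.star_def, RingHomCompTriple.comp_apply, RingHom.id_apply,
      Complex.conj_conj]
    ring
  rw [E1, E2, Finset.sum_comm]
  exact (Finset.sum_congr rfl fun b _ => Finset.sum_comm).trans Finset.sum_comm
/-- First idempotent component map of `φ`. -/
def psi1 {n m : ℕ} (φ : BCMat (Fin n) (Fin n) → BCMat (Fin m) (Fin m))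
    (M : Matrix (Fin n) (Fin n) ℂ) : Matrix (Fin m) (Fin m) ℂ := midem1 (φ (tb1 M))

/-- Second idempotent component map of `φ`. -/
def psi2 {n m : ℕ} (φ : BCMat (Fin n) (Fin n) → BCMat (Fin m) (Fin m))
    (M : Matrix (Fin n) (Fin n) ℂ) : Matrix (Fin m) (Fin m) ℂ := midem2 (φ (tb2 M))

lemma psi1_spec {n m : ℕ} {φ : BCMat (Fin n) (Fin n) → BCMat (Fin m) (Fin m)}
    (hφ : BCLinear φ) (A : BCMat (Fin n) (Fin n)) :
    midem1 (φ A) = psi1 φ (midem1 A) := by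
  have h := congrArg midem1 (hφ.2 ebc1 A)
  rw [bcSmulMat_ebc1, midem1_bcSmulMat, idem1_ebc1, one_smul] at h
  exact h.symm

lemma psi2_spec {n m : ℕ} {φ : BCMat (Fin n) (Fin n) → BCMat (Fin m) (Fin m)}
    (hφ : BCLinear φ) (A : BCMat (Fin n) (Fin n)) :
    midem2 (φ A) = psi2 φ (midem2 A) := by
  have h := congrArg midem2 (hφ.2 ebc2 A)
  rw [bcSmulMat_ebc2, midem2_bcSmulMat, idem2_ebc2, one_smul] at h
  exact h.symm

lemma idem1_pair (c : ℂ) : idem1 ((c, 0) : BC) = c := by simp [idem1]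
lemma idem2_pair (c : ℂ) : idem2 ((c, 0) : BC) = c := by simp [idem2]

lemma psi1_add {n m : ℕ} {φ : BCMat (Fin n) (Fin n) → BCMat (Fin m) (Fin m)}
    (hφ : BCLinear φ) (M N : Matrix (Fin n) (Fin n) ℂ) :
    psi1 φ (M + N) = psi1 φ M + psi1 φ N := by
  unfold psi1
  rw [tb1_add, hφ.1, midem1_add]

lemma psi2_add {n m : ℕ} {φ : BCMat (Fin n) (Fin n) → BCMat (Fin m) (Fin m)}
    (hφ : BCLinear φ) (M N : Matrix (Fin n) (Fin n) ℂ) :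
    psi2 φ (M + N) = psi2 φ M + psi2 φ N := by
  unfold psi2
  rw [tb2_add, hφ.1, midem2_add]

lemma psi1_smul {n m : ℕ} {φ : BCMat (Fin n) (Fin n) → BCMat (Fin m) (Fin m)}
    (hφ : BCLinear φ) (c : ℂ) (M : Matrix (Fin n) (Fin n) ℂ) :
    psi1 φ (c • M) = c • psi1 φ M := by
  unfold psi1
  rw [tb1_smul, hφ.2, midem1_bcSmulMat, idem1_pair]

lemma psi2_smul {n m : ℕ} {φ : BCMat (Fin n) (Fin n) → BCMat (Fin m) (Fin m)}
    (hφ : BCLinear φ) (c : ℂ) (M : Matrix (Fin n) (Fin n) ℂ) :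
    psi2 φ (c • M) = c • psi2 φ M := by
  unfold psi2
  rw [tb2_smul, hφ.2, midem2_bcSmulMat, idem2_pair]

/-- The (unnormalized) maximally entangled matrix. -/
def entMat (n : ℕ) : Matrix (Fin n × Fin n) (Fin n × Fin n) ℂ :=
  (Matrix.of fun p (_ : Fin 1) => if p.1 = p.2 then (1:ℂ) else 0) *
  (Matrix.of fun p (_ : Fin 1) => if p.1 = p.2 then (1:ℂ) else 0)ᴴ

lemma entMat_posSemidef (n : ℕ) : (entMat n).PosSemidef :=
  Matrix.posSemidef_self_mul_conjTranspose _

lemma entMat_block (n : ℕ) (a b : Fin n) :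
    (Matrix.of fun i k => entMat n (a, i) (b, k)) = Matrix.single a b (1:ℂ) := by
  ext i k
  by_cases h1 : a = i <;> by_cases h2 : b = k <;>
    simp [entMat, Matrix.mul_apply, Matrix.single, h1, h2]

lemma midem1_block {N n m : ℕ} {φ : BCMat (Fin n) (Fin n) → BCMat (Fin m) (Fin m)}
    (hφ : BCLinear φ) (A : BCMat (Fin N × Fin n) (Fin N × Fin n)) :
    midem1 (blockExt φ N A) = Matrix.of fun p q =>
      psi1 φ (Matrix.of fun a b => midem1 A (p.1, a) (q.1, b)) p.2 q.2 := by
  ext p q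
  have hb : (Matrix.of fun a b => midem1 A (p.1, a) (q.1, b)) =
      midem1 (Matrix.of fun a b => A.1 (p.1, a) (q.1, b),
              Matrix.of fun a b => A.2 (p.1, a) (q.1, b)) := by
    ext a b
    simp [midem1]
  rw [Matrix.of_apply, hb, ← psi1_spec hφ]
  simp [midem1, blockExt]

lemma midem2_block {N n m : ℕ} {φ : BCMat (Fin n) (Fin n) → BCMat (Fin m) (Fin m)}
    (hφ : BCLinear φ) (A : BCMat (Fin N × Fin n) (Fin N × Fin n)) :
    midem2 (blockExt φ N A) = Matrix.of fun p q =>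
      psi2 φ (Matrix.of fun a b => midem2 A (p.1, a) (q.1, b)) p.2 q.2 := by
  ext p q
  have hb : (Matrix.of fun a b => midem2 A (p.1, a) (q.1, b)) =
      midem2 (Matrix.of fun a b => A.1 (p.1, a) (q.1, b),
              Matrix.of fun a b => A.2 (p.1, a) (q.1, b)) := by
    ext a b
    simp [midem2]
  rw [Matrix.of_apply, hb, ← psi2_spec hφ]
  simp [midem2, blockExt]

lemma psi1_choi_pos {n m : ℕ} {φ : BCMat (Fin n) (Fin n) → BCMat (Fin m) (Fin m)}
    (hφ : BCLinear φ) (hcp : CompletelyHypPos φ) :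
    (Matrix.of fun (p q : Fin n × Fin m) =>
        psi1 φ (Matrix.single p.1 q.1 1) p.2 q.2).PosSemidef := by
  have hH : HypPos (tb1 (entMat n)) := by
    rw [hypPos_iff]
    constructor
    · rw [midem1_tb1]; exact entMat_posSemidef n
    · rw [midem2_tb1]; exact Matrix.PosSemidef.zero
  have hout := (hypPos_iff _).mp (hcp n (tb1 (entMat n)) hH) |>.1
  rw [midem1_block hφ] at hout
  convert hout using 1
  ext p q
  simp only [Matrix.of_apply]
  congr 1
  rw [midem1_tb1]
  exact (entMat_block n p.1 q.1).symm

lemma psi2_choi_pos {n m : ℕ} {φ : BCMat (Fin n) (Fin n) → BCMat (Fin m) (Fin m)}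
    (hφ : BCLinear φ) (hcp : CompletelyHypPos φ) :
    (Matrix.of fun (p q : Fin n × Fin m) =>
        psi2 φ (Matrix.single p.1 q.1 1) p.2 q.2).PosSemidef := by
  have hH : HypPos (tb2 (entMat n)) := by
    rw [hypPos_iff]
    constructor
    · rw [midem1_tb2]; exact Matrix.PosSemidef.zero
    · rw [midem2_tb2]; exact entMat_posSemidef n
  have hout := (hypPos_iff _).mp (hcp n (tb2 (entMat n)) hH) |>.2
  rw [midem2_block hφ] at hout
  convert hout using 1
  ext p q
  simp only [Matrix.of_apply]
  congr 1
  rw [midem2_tb2]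
  exact (entMat_block n p.1 q.1).symm

/-- Combine two complex matrices into the bicomplex matrix with those idempotent parts. -/
def mkBC {I J : Type} (M1 M2 : Matrix I J ℂ) : BCMat I J :=
  ((2:ℂ)⁻¹ • (M1 + M2), (Complex.I / 2) • (M1 - M2))

lemma midem1_mkBC {I J : Type} (M1 M2 : Matrix I J ℂ) : midem1 (mkBC M1 M2) = M1 := by
  ext i j
  simp only [midem1, mkBC, Matrix.sub_apply, Matrix.add_apply, Matrix.smul_apply, smul_eq_mul]
  linear_combination (-(M1 i j - M2 i j)/2) * Complex.I_sq

lemma midem2_mkBC {I J : Type} (M1 M2 : Matrix I J ℂ) : midem2 (mkBC M1 M2) = M2 := by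
  ext i j
  simp only [midem2, mkBC, Matrix.sub_apply, Matrix.add_apply, Matrix.smul_apply, smul_eq_mul]
  linear_combination ((M1 i j - M2 i j)/2) * Complex.I_sq
/-- bicomplex Choi theorem: every `𝔹ℂ`-linear completely
hyperbolic positive map has a bicomplex Kraus decomposition
`φ(A) = Σᵢ Vᵢ·A·(Vᵢ*)ᵗ`; that is, `φ` is a finite bicomplex quantum channel. -/
theorem bicomplex_choi {n m : ℕ}
    (φ : BCMat (Fin n) (Fin n) → BCMat (Fin m) (Fin m))
    (hφ : BCLinear φ) (hcp : CompletelyHypPos φ) :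
    ∃ (r : ℕ) (V : Fin r → BCMat (Fin m) (Fin n)),
      ∀ A : BCMat (Fin n) (Fin n),
        φ A = ∑ i, bmul (bmul (V i) A) (bcStarT (V i)) := by
  obtain ⟨W1, hW1⟩ := complex_choi (psi1 φ) (psi1_add hφ) (psi1_smul hφ) (psi1_choi_pos hφ hcp)
  obtain ⟨W2, hW2⟩ := complex_choi (psi2 φ) (psi2_add hφ) (psi2_smul hφ) (psi2_choi_pos hφ hcp)
  refine ⟨n * m, fun i => mkBC (W1 (finProdFinEquiv.symm i)) (W2 (finProdFinEquiv.symm i)),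
    fun A => ?_⟩
  apply bcmat_ext
  · rw [psi1_spec hφ, hW1, midem1_sum,
      ← Equiv.sum_comp (finProdFinEquiv.symm : Fin (n*m) ≃ Fin n × Fin m)
        (fun k => W1 k * midem1 A * (W1 k)ᴴ)]
    apply Finset.sum_congr rfl
    intro i _
    rw [midem1_bmul, midem1_bmul, midem1_bcStarT, midem1_mkBC]
  · rw [psi2_spec hφ, hW2, midem2_sum,
      ← Equiv.sum_comp (finProdFinEquiv.symm : Fin (n*m) ≃ Fin n × Fin m)
        (fun k => W2 k * midem2 A * (W2 k)ᴴ)]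
    apply Finset.sum_congr rfl
    intro i _
    rw [midem2_bmul, midem2_bmul, midem2_bcStarT, midem2_mkBC]

end
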